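/- For every steplength γ > 0 and every j ≥ 0, the AsyRK iterates satisfy 𝔼(‖Ax_{j+1} − b‖²) ≥ (1 − γλ_max/m) 𝔼(‖Ax_j − b‖²) − (γλ_max/m) 𝔼(‖Ax_{k(j)} − b‖²). -/

import Mathlib

open MeasureTheory ProbabilityTheory Matrix Finset
open scoped Classical

section Aux

lemma rayleigh_bound {m : ℕ} (hm : 0 < m) (B : Matrix (Fin m) (Fin m) ℝ) (hB : B.IsHermitian) :
    ∃ μ : ℝ, (∃ v : Fin m → ℝ, v ≠ 0 ∧ B.mulVec v = μ • v) ∧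
      ∀ w : Fin m → ℝ, ∑ i, w i * B.mulVec w i ≤ μ * ∑ i, w i * w i := by
  haveI : NeZero m := ⟨hm.ne'⟩
  set E := EuclideanSpace ℝ (Fin m)
  set T := Matrix.toEuclideanLin B with hT'
  have hT : T.IsSymmetric := Matrix.isHermitian_iff_isSymmetric.mp hB
  set μ : ℝ := ⨆ x : { x : E // x ≠ 0 }, RCLike.re (inner ℝ (T x) (x : E) : ℝ) / ‖(x : E)‖ ^ 2 with hμ
  have heig := hT.hasEigenvalue_iSup_of_finiteDimensional
  rw [← hμ] at heig
  obtain ⟨v, hv⟩ := heig.exists_hasEigenvector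
  have hveq : T v = μ • v := hv.apply_eq_smul
  set T2 := LinearMap.toContinuousLinearMap T with hT2
  have hbdd : BddAbove (Set.range fun x : { x : E // x ≠ 0 } =>
      RCLike.re (inner ℝ (T x) (x : E) : ℝ) / ‖(x : E)‖ ^ 2) := by
    refine ⟨‖T2‖, ?_⟩
    rintro r ⟨⟨y, hy⟩, rfl⟩
    simp only [RCLike.re_to_real]
    rw [div_le_iff₀ (pow_pos (norm_pos_iff.mpr hy) 2)]
    calc (inner ℝ (T y) y : ℝ) ≤ ‖T y‖ * ‖y‖ := real_inner_le_norm _ _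
      _ = ‖T2 y‖ * ‖y‖ := rfl
      _ ≤ (‖T2‖ * ‖y‖) * ‖y‖ := by
          exact mul_le_mul_of_nonneg_right (T2.le_opNorm y) (norm_nonneg _)
      _ = ‖T2‖ * ‖y‖ ^ 2 := by ring
  have hle : ∀ w : E, (inner ℝ (T w) w : ℝ) ≤ μ * ‖w‖ ^ 2 := by
    intro w
    rcases eq_or_ne w 0 with rfl | hw
    · simp
    · have h2 : RCLike.re (inner ℝ (T w) w : ℝ) / ‖w‖ ^ 2 ≤ μ := le_ciSup hbdd ⟨w, hw⟩
      simp only [RCLike.re_to_real] at h2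
      rw [div_le_iff₀ (pow_pos (norm_pos_iff.mpr hw) 2)] at h2
      linarith
  refine ⟨μ, ⟨(WithLp.equiv 2 _) v, ?_, ?_⟩, ?_⟩
  · simpa using hv.right
  · have := congrArg (WithLp.equiv 2 (Fin m → ℝ)) hveq
    simpa [hT', Matrix.toEuclideanLin_apply] using this
  · intro w
    have h := hle ((WithLp.equiv 2 (Fin m → ℝ)).symm w)
    calc ∑ i, w i * B.mulVec w i = (inner ℝ (Matrix.toEuclideanLin B ((WithLp.equiv 2 (Fin m → ℝ)).symm w)) ((WithLp.equiv 2 (Fin m → ℝ)).symm w) : ℝ) := by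
          rw [Matrix.toEuclideanLin_apply_piLp_toLp]
          simp only [PiLp.inner_apply, RCLike.inner_apply, starRingEnd_apply, star_trivial]
          exact Finset.sum_congr rfl fun i _ => by rfl
      _ ≤ μ * ‖(WithLp.equiv 2 (Fin m → ℝ)).symm w‖ ^ 2 := h
      _ = μ * ∑ i, w i * w i := by
          rw [← real_inner_self_eq_norm_sq]
          simp only [PiLp.inner_apply, RCLike.inner_apply, starRingEnd_apply, star_trivial]
          rfl

lemma dot_swap {m n : ℕ} (A : Matrix (Fin m) (Fin n) ℝ) (v : Fin n → ℝ) (u : Fin m → ℝ) :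
    ∑ t, v t * Aᵀ.mulVec u t = ∑ i, u i * A.mulVec v i := by
  simp only [Matrix.mulVec, dotProduct, Matrix.transpose_apply, Finset.mul_sum]
  rw [Finset.sum_comm]
  exact Finset.sum_congr rfl fun i _ => Finset.sum_congr rfl fun t _ => by ring

lemma sumsq_pos {n : ℕ} {v : Fin n → ℝ} (hv : v ≠ 0) : 0 < ∑ t, v t * v t := by
  obtain ⟨t0, ht0⟩ : ∃ t, v t ≠ 0 := by
    by_contra h; push_neg at h; exact hv (funext h)
  exact Finset.sum_pos' (fun t _ => mul_self_nonneg _)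
    ⟨t0, Finset.mem_univ _, mul_self_pos.mpr ht0⟩

lemma key_bound {m n : ℕ} (hm : 0 < m) (A : Matrix (Fin m) (Fin n) ℝ) (lam : ℝ)
    (hlam : IsGreatest {c : ℝ | ∃ v : Fin n → ℝ, v ≠ 0 ∧ (Aᵀ * A).mulVec v = c • v} lam) :
    ∀ w : Fin m → ℝ, ∑ t, (Aᵀ.mulVec w t) ^ 2 ≤ lam * ∑ i, (w i) ^ 2 := by
  have hAT : Aᴴ = Aᵀ := by ext i j; simp [Matrix.conjTranspose_apply]
  have hherm : (A * Aᵀ).IsHermitian := by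
    have := Matrix.isHermitian_mul_conjTranspose_self A
    rwa [hAT] at this
  have hlam0 : 0 ≤ lam := by
    obtain ⟨v, hv0, hveq⟩ := hlam.1
    have h1 : ∑ t, v t * (Aᵀ * A).mulVec v t = ∑ i, A.mulVec v i * A.mulVec v i := by
      rw [← Matrix.mulVec_mulVec, dot_swap]
    have h2 : ∑ t, v t * (Aᵀ * A).mulVec v t = lam * ∑ t, v t * v t := by
      rw [hveq]; simp [Finset.mul_sum]; exact Finset.sum_congr rfl fun t _ => by ring
    have h3 : 0 ≤ lam * ∑ t, v t * v t := by
      rw [← h2, h1]; exact Finset.sum_nonneg fun i _ => mul_self_nonneg _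
    have h4 := sumsq_pos hv0
    nlinarith
  obtain ⟨μ, ⟨v, hv0, hveig⟩, hbound⟩ := rayleigh_bound hm (A * Aᵀ) hherm
  intro w
  have hkey : ∑ t, (Aᵀ.mulVec w t) ^ 2 = ∑ i, w i * (A * Aᵀ).mulVec w i := by
    rw [← Matrix.mulVec_mulVec, ← dot_swap]
    exact Finset.sum_congr rfl fun t _ => by ring
  have hb := hbound w
  have hwsq : ∑ i, w i * w i = ∑ i, (w i) ^ 2 :=
    Finset.sum_congr rfl fun i _ => by ring
  rcases le_or_gt μ 0 with hμ | hμ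
  · have h5 : ∑ t, (Aᵀ.mulVec w t) ^ 2 ≤ μ * ∑ i, w i * w i := by rw [hkey]; exact hb
    have h0 : μ * ∑ i, w i * w i ≤ 0 :=
      mul_nonpos_of_nonpos_of_nonneg hμ (Finset.sum_nonneg fun i _ => mul_self_nonneg _)
    have h6 : ∑ t, (Aᵀ.mulVec w t) ^ 2 ≤ 0 := le_trans h5 h0
    exact le_trans h6 (by positivity)
  · have hμlam : μ ≤ lam := by
      apply hlam.2
      refine ⟨Aᵀ.mulVec v, ?_, ?_⟩
      · intro hu
        apply hv0
        have h7 : (A * Aᵀ).mulVec v = 0 := by rw [← Matrix.mulVec_mulVec, hu, Matrix.mulVec_zero]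
        rw [hveig] at h7
        rcases smul_eq_zero.mp h7 with h | h
        · exact absurd h hμ.ne'
        · exact h
      · rw [← Matrix.mulVec_mulVec]
        have h5 : A *ᵥ (Aᵀ *ᵥ v) = μ • v := by rw [Matrix.mulVec_mulVec]; exact hveig
        rw [h5, Matrix.mulVec_smul]
    calc ∑ t, (Aᵀ.mulVec w t) ^ 2 = ∑ i, w i * (A * Aᵀ).mulVec w i := hkey
      _ ≤ μ * ∑ i, w i * w i := hb
      _ ≤ lam * ∑ i, w i * w i :=
          mul_le_mul_of_nonneg_right hμlam (Finset.sum_nonneg fun i _ => mul_self_nonneg _)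
      _ = lam * ∑ i, (w i) ^ 2 := by rw [hwsq]

lemma atoms_integral {Ω : Type*} [MeasurableSpace Ω] (P : Measure Ω) [IsProbabilityMeasure P]
    {κ : Type*} [Fintype κ] [MeasurableSpace κ] [MeasurableSingletonClass κ]
    (Y : Ω → κ) (hY : Measurable Y) (G : κ → ℝ) :
    ∫ ω, G (Y ω) ∂P = ∑ w, (P {ω | Y ω = w}).toReal * G w := by
  have hms : ∀ w : κ, MeasurableSet {ω | Y ω = w} := fun w => hY (measurableSet_singleton w)
  have h1 : ∀ ω, G (Y ω) = ∑ w, Set.indicator {ω' | Y ω' = w} (fun _ => G w) ω := by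
    intro ω
    rw [Finset.sum_eq_single (Y ω)]
    · simp [Set.indicator_apply]
    · intro w _ hw
      simp [Set.indicator_apply, Set.mem_setOf_eq]
      intro h; exact absurd h (Ne.symm hw)
    · intro h; exact absurd (Finset.mem_univ _) h
  calc ∫ ω, G (Y ω) ∂P
      = ∫ ω, ∑ w, Set.indicator {ω' | Y ω' = w} (fun _ => G w) ω ∂P := by
        congr 1; funext ω; exact h1 ω
    _ = ∑ w, ∫ ω, Set.indicator {ω' | Y ω' = w} (fun _ => G w) ω ∂P :=
        integral_finset_sum _ (fun w _ => (integrable_const (G w)).indicator (hms w))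
    _ = ∑ w, (P {ω | Y ω = w}).toReal * G w := by
        refine Finset.sum_congr rfl fun w _ => ?_
        rw [integral_indicator_const _ (hms w), smul_eq_mul]; rfl

lemma indep_split {Ω : Type*} [MeasurableSpace Ω] (P : Measure Ω) [IsProbabilityMeasure P]
    {κ : Type*} [MeasurableSpace κ] [MeasurableSingletonClass κ]
    (Z : ℕ → Ω → κ)
    (hindep : iIndepFun Z P) (j : ℕ)
    (w : Fin j → κ) (p : κ) :
    P {ω | (fun i : Fin j => Z i ω) = w ∧ Z j ω = p} =
      P {ω | (fun i : Fin j => Z i ω) = w} * P {ω | Z j ω = p} := by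
  set sets : ℕ → Set κ := fun i => if h : i < j then {w ⟨i, h⟩} else {p} with hsets
  have hmeas : ∀ i, MeasurableSet (sets i) := by
    intro i
    by_cases h : i < j <;> simp [hsets, h, measurableSet_singleton]
  have hmul := iIndepFun_iff_measure_inter_preimage_eq_mul.mp hindep
  have h1 := hmul (Finset.range (j+1)) (fun i _ => hmeas i)
  have h2 := hmul (Finset.range j) (fun i _ => hmeas i)
  have E1 : (⋂ i ∈ Finset.range (j+1), Z i ⁻¹' sets i) =
      {ω | (fun i : Fin j => Z i ω) = w ∧ Z j ω = p} := by
    ext ω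
    simp only [Set.mem_iInter, Finset.mem_range, Set.mem_preimage, Set.mem_setOf_eq,
      funext_iff]
    constructor
    · intro h
      refine ⟨fun i => ?_, ?_⟩
      · have := h i.val (by omega)
        rw [hsets] at this
        simpa [i.isLt] using this
      · have := h j (by omega)
        rw [hsets] at this
        simpa using this
    · rintro ⟨h, hj⟩ i hi
      rw [hsets]
      by_cases hij : i < j
      · simpa [hij] using h ⟨i, hij⟩
      · have : i = j := by omega
        subst this
        simpa [hij] using hj
  have E2 : (⋂ i ∈ Finset.range j, Z i ⁻¹' sets i) =
      {ω | (fun i : Fin j => Z i ω) = w} := by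
    ext ω
    simp only [Set.mem_iInter, Finset.mem_range, Set.mem_preimage, Set.mem_setOf_eq,
      funext_iff]
    constructor
    · intro h i
      have := h i.val i.isLt
      rw [hsets] at this
      simpa [i.isLt] using this
    · intro h i hi
      rw [hsets]
      simpa [hi] using h ⟨i, hi⟩
  have hZjset : Z j ⁻¹' sets j = {ω | Z j ω = p} := by
    ext ω; rw [hsets]; simp
  rw [E1] at h1
  rw [E2] at h2
  rw [h1, Finset.prod_range_succ, ← h2, hZjset]

end Aux

theorem stmt11
    {m n : ℕ} (hm : 0 < m) (hn : 0 < n)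
    (A : Matrix (Fin m) (Fin n) ℝ) (b : Fin m → ℝ)
    (hconsistent : ∃ z : Fin n → ℝ, A.mulVec z = b)
    (hrows : ∀ i, ∑ t, (A i t) ^ 2 = 1)
    (θ : Fin m → ℕ)
    (hθ : ∀ i, θ i = (Finset.univ.filter (fun t => A i t ≠ 0)).card)
    (lammax : ℝ)
    (hlammax : IsGreatest
      {c : ℝ | ∃ v : Fin n → ℝ, v ≠ 0 ∧ (Aᵀ * A).mulVec v = c • v} lammax)
    (τ : ℕ) (hτ : 1 ≤ τ)
    (k : ℕ → ℕ) (hk : ∀ j, j - τ ≤ k j ∧ k j ≤ j)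
    (γ : ℝ) (hγ : 0 < γ)
    {Ω : Type*} [MeasurableSpace Ω] (P : Measure Ω) [IsProbabilityMeasure P]
    (Z : ℕ → Ω → Fin m × Fin n)
    (hZmeas : ∀ j, Measurable (Z j))
    (hZindep : iIndepFun Z P)
    (hZdist : ∀ j (p : Fin m × Fin n),
      P {ω | Z j ω = p} =
        if A p.1 p.2 ≠ 0 then ((m : ENNReal) * (θ p.1 : ENNReal))⁻¹ else 0)
    (x0 : Fin n → ℝ)
    (x : ℕ → Ω → Fin n → ℝ)
    (hx0 : ∀ ω, x 0 ω = x0)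
    (hrec : ∀ j ω s, x (j + 1) ω s = x j ω s -
      (if s = (Z j ω).2 then
        γ * (θ (Z j ω).1 : ℝ) * A (Z j ω).1 (Z j ω).2 *
          ((∑ t, A (Z j ω).1 t * x (k j) ω t) - b (Z j ω).1)
       else 0))
    (j : ℕ) :
    (1 - γ * lammax / m) * (∫ ω, ∑ s, (A.mulVec (x j ω) s - b s) ^ 2 ∂P) - γ * lammax / m * (∫ ω, ∑ s, (A.mulVec (x (k j) ω) s - b s) ^ 2 ∂P)
      ≤ (∫ ω, ∑ s, (A.mulVec (x (j + 1) ω) s - b s) ^ 2 ∂P) := by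
  classical
  have hm0 : (m : ℝ) ≠ 0 := Nat.cast_ne_zero.mpr hm.ne'
  -- positivity of θ
  have hθpos : ∀ i, 0 < θ i := by
    intro i
    rw [hθ]
    rcases Finset.card_pos.mpr with _
    by_contra h
    push_neg at h
    have hall : ∀ t, A i t = 0 := by
      intro t
      by_contra ht
      have hmem : t ∈ Finset.univ.filter (fun t => A i t ≠ 0) :=
        Finset.mem_filter.mpr ⟨Finset.mem_univ _, ht⟩
      have := Finset.card_pos.mpr ⟨t, hmem⟩
      omega
    have h1 := hrows i
    rw [Finset.sum_eq_zero (fun t _ => by rw [hall t]; ring)] at h1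
    norm_num at h1
  -- representation of x J as a function of (Z 0, ..., Z (J-1))
  have hrep : ∀ J : ℕ, ∃ F : (Fin J → Fin m × Fin n) → (Fin n → ℝ),
      ∀ ω, x J ω = F (fun i => Z i ω) := by
    intro J
    induction J using Nat.strong_induction_on with
    | _ J ih =>
      match J with
      | 0 => exact ⟨fun _ => x0, fun ω => hx0 ω⟩
      | (J + 1) =>
        obtain ⟨FJ, hFJ⟩ := ih J (lt_add_one J)
        obtain ⟨FK, hFK⟩ := ih (k J) (Nat.lt_succ_of_le (hk J).2)
        refine ⟨fun v s => FJ (fun i => v i.castSucc) s -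
          (if s = (v (Fin.last J)).2 then
            γ * (θ (v (Fin.last J)).1 : ℝ) * A (v (Fin.last J)).1 (v (Fin.last J)).2 *
              ((∑ t, A (v (Fin.last J)).1 t *
                FK (fun i => v (Fin.castLE (Nat.lt_succ_of_le (hk J).2).le i)) t)
                - b (v (Fin.last J)).1)
           else 0), ?_⟩
        intro ω
        funext s
        rw [hrec J ω s, hFJ ω, hFK ω]
        rfl
  obtain ⟨Fj, hFj⟩ := hrep j
  obtain ⟨Fk0, hFk0⟩ := hrep (k j)
  set Fk : (Fin j → Fin m × Fin n) → (Fin n → ℝ) :=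
    fun w => Fk0 (fun i => w (Fin.castLE (hk j).2 i)) with hFkdef
  have hFk : ∀ ω, x (k j) ω = Fk (fun i : Fin j => Z i ω) := by
    intro ω; rw [hFk0 ω]; rfl
  set ρj : (Fin j → Fin m × Fin n) → Fin m → ℝ :=
    fun w i0 => A.mulVec (Fj w) i0 - b i0 with hρjdef
  set ρk : (Fin j → Fin m × Fin n) → Fin m → ℝ :=
    fun w i0 => A.mulVec (Fk w) i0 - b i0 with hρkdef
  set δ : (Fin j → Fin m × Fin n) → (Fin m × Fin n) → ℝ :=
    fun w p => γ * (θ p.1 : ℝ) * A p.1 p.2 * ((∑ t, A p.1 t * Fk w t) - b p.1) with hδdef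
  set xn : (Fin j → Fin m × Fin n) → (Fin m × Fin n) → Fin n → ℝ :=
    fun w p s => Fj w s - (if s = p.2 then δ w p else 0) with hxndef
  set G1 : ((Fin j → Fin m × Fin n) × (Fin m × Fin n)) → ℝ :=
    fun a => ∑ s, (A.mulVec (xn a.1 a.2) s - b s) ^ 2 with hG1def
  set G2 : (Fin j → Fin m × Fin n) → ℝ := fun w => ∑ s, (ρj w s) ^ 2 with hG2def
  set Gk : (Fin j → Fin m × Fin n) → ℝ := fun w => ∑ s, (ρk w s) ^ 2 with hGkdef
  set G3 : ((Fin j → Fin m × Fin n) × (Fin m × Fin n)) → ℝ :=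
    fun a => δ a.1 a.2 * ∑ s, A s a.2.2 * ρj a.1 s with hG3def
  have hYmeas : Measurable (fun ω => (fun i : Fin j => Z i ω)) :=
    measurable_pi_lambda _ fun i => hZmeas i
  have hY'meas : Measurable (fun ω => ((fun i : Fin j => Z i ω), Z j ω)) :=
    hYmeas.prodMk (hZmeas j)
  have hxnω : ∀ ω, x (j + 1) ω = xn (fun i : Fin j => Z i ω) (Z j ω) := by
    intro ω
    funext s
    rw [hrec j ω s, hFj ω, hFk ω]
  -- integral identities
  have I1 : (∫ ω, ∑ s, (A.mulVec (x (j + 1) ω) s - b s) ^ 2 ∂P)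
      = ∑ a : (Fin j → Fin m × Fin n) × (Fin m × Fin n),
          (P {ω | ((fun i : Fin j => Z i ω), Z j ω) = a}).toReal * G1 a := by
    have := atoms_integral P (fun ω => ((fun i : Fin j => Z i ω), Z j ω)) hY'meas G1
    rw [← this]
    refine integral_congr_ae (Filter.Eventually.of_forall fun ω => ?_)
    rw [hG1def]
    simp only
    rw [← hxnω ω]
  have I2' : (∫ ω, ∑ s, (A.mulVec (x j ω) s - b s) ^ 2 ∂P)
      = ∑ a : (Fin j → Fin m × Fin n) × (Fin m × Fin n),
          (P {ω | ((fun i : Fin j => Z i ω), Z j ω) = a}).toReal * G2 a.1 := by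
    have := atoms_integral P (fun ω => ((fun i : Fin j => Z i ω), Z j ω)) hY'meas
      (fun a => G2 a.1)
    rw [← this]
    refine integral_congr_ae (Filter.Eventually.of_forall fun ω => ?_)
    rw [hG2def]
    simp only [hρjdef]
    rw [← hFj ω]
  have I2 : (∫ ω, ∑ s, (A.mulVec (x j ω) s - b s) ^ 2 ∂P)
      = ∑ w : Fin j → Fin m × Fin n,
          (P {ω | (fun i : Fin j => Z i ω) = w}).toReal * G2 w := by
    have := atoms_integral P (fun ω => (fun i : Fin j => Z i ω)) hYmeas G2
    rw [← this]
    refine integral_congr_ae (Filter.Eventually.of_forall fun ω => ?_)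
    rw [hG2def]
    simp only [hρjdef]
    rw [← hFj ω]
  have Ik : (∫ ω, ∑ s, (A.mulVec (x (k j) ω) s - b s) ^ 2 ∂P)
      = ∑ w : Fin j → Fin m × Fin n,
          (P {ω | (fun i : Fin j => Z i ω) = w}).toReal * Gk w := by
    have := atoms_integral P (fun ω => (fun i : Fin j => Z i ω)) hYmeas Gk
    rw [← this]
    refine integral_congr_ae (Filter.Eventually.of_forall fun ω => ?_)
    rw [hGkdef]
    simp only [hρkdef]
    rw [← hFk ω]
  -- pointwise atom inequality
  have hstep1 : ∀ a : (Fin j → Fin m × Fin n) × (Fin m × Fin n),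
      G2 a.1 - 2 * G3 a ≤ G1 a := by
    rintro ⟨w, p⟩
    have hs : ∀ s, A.mulVec (xn w p) s - b s = ρj w s - δ w p * A s p.2 := by
      intro s
      have hmv : A.mulVec (xn w p) s = A.mulVec (Fj w) s - δ w p * A s p.2 := by
        simp only [Matrix.mulVec, dotProduct, hxndef, mul_sub, mul_ite, mul_zero]
        rw [Finset.sum_sub_distrib]
        congr 1
        rw [Finset.sum_ite_eq' Finset.univ p.2 (fun t => A s t * δ w p)]
        simp [mul_comm]
      rw [hmv, hρjdef]
      ring
    have hid : G1 (w, p) = (∑ s, (ρj w s) ^ 2)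
        - 2 * δ w p * (∑ s, A s p.2 * ρj w s) + ∑ s, (δ w p * A s p.2) ^ 2 := by
      rw [hG1def]
      simp only
      rw [Finset.sum_congr rfl (fun s _ => by rw [hs s])]
      rw [Finset.sum_congr rfl (fun s _ => show (ρj w s - δ w p * A s p.2) ^ 2 =
        (ρj w s) ^ 2 - 2 * δ w p * (A s p.2 * ρj w s) + (δ w p * A s p.2) ^ 2 by ring)]
      rw [Finset.sum_add_distrib, Finset.sum_sub_distrib, ← Finset.mul_sum]
    have hnn : 0 ≤ ∑ s, (δ w p * A s p.2) ^ 2 :=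
      Finset.sum_nonneg fun s _ => sq_nonneg _
    have hG3 : G3 (w, p) = δ w p * ∑ s, A s p.2 * ρj w s := rfl
    have hG2 : G2 w = ∑ s, (ρj w s) ^ 2 := rfl
    rw [hG2, hG3, hid]
    ring_nf
    nlinarith [hnn, Finset.sum_nonneg fun s (_ : s ∈ Finset.univ) => mul_nonneg (sq_nonneg (δ w p)) (sq_nonneg (A s p.2))]
  -- inner sum computation
  have hinner : ∀ w : Fin j → Fin m × Fin n,
      ∑ p : Fin m × Fin n, (P {ω | Z j ω = p}).toReal * G3 (w, p)
        = (γ / m) * ∑ t, (Aᵀ.mulVec (ρj w) t) * (Aᵀ.mulVec (ρk w) t) := by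
    intro w
    have hρkval : ∀ i : Fin m, (∑ t, A i t * Fk w t) - b i = ρk w i := fun i => rfl
    have hterm : ∀ (i : Fin m) (t : Fin n),
        (P {ω | Z j ω = (i, t)}).toReal * G3 (w, (i, t))
          = (γ / m) * ((A i t * ρk w i) * (∑ s, A s t * ρj w s)) := by
      intro i t
      rw [hZdist j (i, t)]
      have hG3v : G3 (w, (i, t)) = (γ * (θ i : ℝ) * A i t * ρk w i) * ∑ s, A s t * ρj w s := by
        rw [hG3def]
        simp only [hδdef]
        rw [hρkval i]
      by_cases h : A i t ≠ 0
      · rw [if_pos h]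
        have htr : (((m : ENNReal) * (θ i : ENNReal))⁻¹).toReal = ((m : ℝ) * (θ i : ℝ))⁻¹ := by
          rw [ENNReal.toReal_inv, ENNReal.toReal_mul]
          simp
        rw [htr, hG3v]
        have hθne : (θ i : ℝ) ≠ 0 := Nat.cast_ne_zero.mpr (hθpos i).ne'
        field_simp
      · push_neg at h
        rw [if_neg (by simp [h]), hG3v, h]
        simp
    rw [Fintype.sum_prod_type]
    rw [Finset.sum_congr rfl (fun i _ => Finset.sum_congr rfl (fun t _ => hterm i t))]
    rw [Finset.sum_comm]
    rw [Finset.mul_sum]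
    refine Finset.sum_congr rfl fun t _ => ?_
    have e1 : Aᵀ.mulVec (ρj w) t = ∑ s, A s t * ρj w s := by
      simp [Matrix.mulVec, dotProduct, Matrix.transpose_apply]
    have e2 : Aᵀ.mulVec (ρk w) t = ∑ i, A i t * ρk w i := by
      simp [Matrix.mulVec, dotProduct, Matrix.transpose_apply]
    have hgen : ∀ (c S : ℝ) (g : Fin m → ℝ),
        (∑ i, c * (g i * S)) = c * (S * ∑ i, g i) := by
      intro c S g
      calc ∑ i, c * (g i * S) = ∑ i, (c * S) * g i :=
            Finset.sum_congr rfl fun i _ => by ring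
        _ = (c * S) * ∑ i, g i := by rw [Finset.mul_sum]
        _ = c * (S * ∑ i, g i) := by ring
    rw [e1, e2]
    exact hgen _ _ _
  -- splitting of the joint sum
  have hsplit : ∑ a : (Fin j → Fin m × Fin n) × (Fin m × Fin n),
      (P {ω | ((fun i : Fin j => Z i ω), Z j ω) = a}).toReal * G3 a
        = ∑ w : Fin j → Fin m × Fin n, (P {ω | (fun i : Fin j => Z i ω) = w}).toReal *
            ((γ / m) * ∑ t, (Aᵀ.mulVec (ρj w) t) * (Aᵀ.mulVec (ρk w) t)) := by
    rw [Fintype.sum_prod_type]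
    refine Finset.sum_congr rfl fun w _ => ?_
    rw [← hinner w, Finset.mul_sum]
    refine Finset.sum_congr rfl fun p _ => ?_
    have hset : {ω | ((fun i : Fin j => Z i ω), Z j ω) = (w, p)}
        = {ω | (fun i : Fin j => Z i ω) = w ∧ Z j ω = p} := by
      ext ω; simp [Prod.ext_iff]
    rw [hset, indep_split P Z hZindep j w p, ENNReal.toReal_mul]
    ring
  -- bound for each w
  have hbd : ∀ w : Fin j → Fin m × Fin n,
      2 * ((γ / m) * ∑ t, (Aᵀ.mulVec (ρj w) t) * (Aᵀ.mulVec (ρk w) t))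
        ≤ (γ * lammax / m) * (G2 w + Gk w) := by
    intro w
    have h1 : ∑ t, 2 * ((Aᵀ.mulVec (ρj w) t) * (Aᵀ.mulVec (ρk w) t))
        ≤ (∑ t, (Aᵀ.mulVec (ρj w) t) ^ 2) + ∑ t, (Aᵀ.mulVec (ρk w) t) ^ 2 := by
      rw [← Finset.sum_add_distrib]
      refine Finset.sum_le_sum fun t _ => ?_
      nlinarith [sq_nonneg ((Aᵀ.mulVec (ρj w) t) - (Aᵀ.mulVec (ρk w) t))]
    have h2 := key_bound hm A lammax hlammax (ρj w)
    have h3 := key_bound hm A lammax hlammax (ρk w)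
    have hsum2 : ∑ t, 2 * ((Aᵀ.mulVec (ρj w) t) * (Aᵀ.mulVec (ρk w) t))
        = 2 * ∑ t, (Aᵀ.mulVec (ρj w) t) * (Aᵀ.mulVec (ρk w) t) := by
      rw [Finset.mul_sum]
    have hG2w : G2 w = ∑ i, (ρj w i) ^ 2 := rfl
    have hGkw : Gk w = ∑ i, (ρk w i) ^ 2 := rfl
    have hγm : (0:ℝ) < γ / m := div_pos hγ (by exact_mod_cast hm)
    have h4 : 2 * ∑ t, (Aᵀ.mulVec (ρj w) t) * (Aᵀ.mulVec (ρk w) t)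
        ≤ lammax * G2 w + lammax * Gk w := by
      rw [← hsum2, hG2w, hGkw]
      linarith
    have h5 : (γ / m) * (2 * ∑ t, (Aᵀ.mulVec (ρj w) t) * (Aᵀ.mulVec (ρk w) t))
        ≤ (γ / m) * (lammax * G2 w + lammax * Gk w) :=
      mul_le_mul_of_nonneg_left h4 hγm.le
    calc 2 * ((γ / m) * ∑ t, (Aᵀ.mulVec (ρj w) t) * (Aᵀ.mulVec (ρk w) t))
        = (γ / m) * (2 * ∑ t, (Aᵀ.mulVec (ρj w) t) * (Aᵀ.mulVec (ρk w) t)) := by ring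
      _ ≤ (γ / m) * (lammax * G2 w + lammax * Gk w) := h5
      _ = (γ * lammax / m) * (G2 w + Gk w) := by ring
  -- main chain
  have main1 : (∫ ω, ∑ s, (A.mulVec (x j ω) s - b s) ^ 2 ∂P)
      - 2 * (∑ a : (Fin j → Fin m × Fin n) × (Fin m × Fin n),
          (P {ω | ((fun i : Fin j => Z i ω), Z j ω) = a}).toReal * G3 a)
      ≤ ∫ ω, ∑ s, (A.mulVec (x (j + 1) ω) s - b s) ^ 2 ∂P := by
    rw [I1, I2']
    have e : (∑ a : (Fin j → Fin m × Fin n) × (Fin m × Fin n),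
          (P {ω | ((fun i : Fin j => Z i ω), Z j ω) = a}).toReal * G2 a.1)
        - 2 * (∑ a : (Fin j → Fin m × Fin n) × (Fin m × Fin n),
          (P {ω | ((fun i : Fin j => Z i ω), Z j ω) = a}).toReal * G3 a)
        = ∑ a : (Fin j → Fin m × Fin n) × (Fin m × Fin n),
          (P {ω | ((fun i : Fin j => Z i ω), Z j ω) = a}).toReal * (G2 a.1 - 2 * G3 a) := by
      rw [Finset.mul_sum, ← Finset.sum_sub_distrib]
      refine Finset.sum_congr rfl fun a _ => ?_
      ring
    rw [e]
    refine Finset.sum_le_sum fun a _ => ?_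
    exact mul_le_mul_of_nonneg_left (hstep1 a) ENNReal.toReal_nonneg
  have main2 : 2 * (∑ a : (Fin j → Fin m × Fin n) × (Fin m × Fin n),
      (P {ω | ((fun i : Fin j => Z i ω), Z j ω) = a}).toReal * G3 a)
      ≤ (γ * lammax / m) * ((∫ ω, ∑ s, (A.mulVec (x j ω) s - b s) ^ 2 ∂P)
          + (∫ ω, ∑ s, (A.mulVec (x (k j) ω) s - b s) ^ 2 ∂P)) := by
    rw [hsplit, I2, Ik]
    have e : (γ * lammax / m) * ((∑ w : Fin j → Fin m × Fin n,
          (P {ω | (fun i : Fin j => Z i ω) = w}).toReal * G2 w)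
        + ∑ w : Fin j → Fin m × Fin n,
          (P {ω | (fun i : Fin j => Z i ω) = w}).toReal * Gk w)
        = ∑ w : Fin j → Fin m × Fin n,
          (P {ω | (fun i : Fin j => Z i ω) = w}).toReal *
            ((γ * lammax / m) * (G2 w + Gk w)) := by
      rw [← Finset.sum_add_distrib, Finset.mul_sum]
      refine Finset.sum_congr rfl fun w _ => ?_
      ring
    rw [e, Finset.mul_sum]
    refine Finset.sum_le_sum fun w _ => ?_
    have := mul_le_mul_of_nonneg_left (hbd w)
      (ENNReal.toReal_nonneg : (0:ℝ) ≤ (P {ω | (fun i : Fin j => Z i ω) = w}).toReal)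
    calc 2 * ((P {ω | (fun i : Fin j => Z i ω) = w}).toReal *
          ((γ / m) * ∑ t, (Aᵀ.mulVec (ρj w) t) * (Aᵀ.mulVec (ρk w) t)))
        = (P {ω | (fun i : Fin j => Z i ω) = w}).toReal *
          (2 * ((γ / m) * ∑ t, (Aᵀ.mulVec (ρj w) t) * (Aᵀ.mulVec (ρk w) t))) := by ring
      _ ≤ (P {ω | (fun i : Fin j => Z i ω) = w}).toReal *
          ((γ * lammax / m) * (G2 w + Gk w)) := this
  linarith
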